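/- Let u : [0,∞) → ℝ be twice differentiable and convex with unique minimum at 1, and U(x) = u(|x|²) on ℝ^d. The ODE dx/dt = −∇U(x) is strongly contracting (i.e. there exist r, t > 0 such that |x_t(y)| ≤ r for every initial condition y ∈ ℝ^d) if and only if ∫_R^∞ |∇U(x e₁)|^{-1} dx < ∞ for some R > 0, where e₁ is a unit vector. -/

import Mathlib

open MeasureTheory

section Aux

variable {F : Type*} [NormedAddCommGroup F] [InnerProductSpace ℝ F] [CompleteSpace F]

theorem grad_radial (u : ℝ → ℝ) (hu : ContDiff ℝ 2 u)
    (U : F → ℝ) (hUdef : ∀ x, U x = u (‖x‖ ^ 2)) (z : F) :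
    HasGradientAt U ((2 * deriv u (‖z‖ ^ 2)) • z) z := by
  rw [hasGradientAt_iff_hasFDerivAt]
  have h1 : HasFDerivAt (fun x : F => ‖x‖ ^ 2) (2 • (innerSL ℝ z)) z :=
    (hasStrictFDerivAt_norm_sq z).hasFDerivAt
  have h2 : HasDerivAt u (deriv u (‖z‖ ^ 2)) (‖z‖ ^ 2) :=
    ((hu.differentiable (by norm_num)) (‖z‖^2)).hasDerivAt
  have h3 := h2.comp_hasFDerivAt z h1
  have : U = fun x => u (‖x‖^2) := funext hUdef
  rw [this]
  convert h3 using 1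
  · rfl
  · rfl
  ext y
  simp [InnerProductSpace.toDual_apply_apply, real_inner_smul_left, real_inner_smul_right]
  ring

theorem deriv_pos_of (u : ℝ → ℝ) (hu : ContDiff ℝ 2 u)
    (hconv : ConvexOn ℝ (Set.Ici 0) u)
    (hmin : ∀ s ∈ Set.Ici (0 : ℝ), s ≠ 1 → u 1 < u s) :
    ∀ s : ℝ, 1 < s → 0 < deriv u s := by
  intro s hs
  have h1 : (1:ℝ) ∈ Set.Ici (0:ℝ) := by norm_num
  have h2 : s ∈ Set.Ici (0:ℝ) := le_of_lt (show (0:ℝ) < s by linarith)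
  have := hconv.slope_le_deriv h1 h2 (by linarith)
    ((hu.differentiable (by norm_num)) s)
  have hlt : u 1 < u s := hmin s h2 (by linarith)
  have hslope : 0 < slope u 1 s := by
    rw [slope_def_field]
    exact div_pos (by linarith) (by linarith)
  linarith

theorem psi_deriv (u : ℝ → ℝ) (hu : ContDiff ℝ 2 u)
    (U : F → ℝ) (hUdef : ∀ x, U x = u (‖x‖ ^ 2))
    (z : ℝ → F) (t : ℝ)
    (hz : HasDerivAt z (-(gradient U (z t))) t) (hpos : 0 < ‖z t‖) :
    HasDerivAt (fun s => ‖z s‖) (-(2 * deriv u (‖z t‖^2) * ‖z t‖)) t := by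
  have hgrad : gradient U (z t) = (2 * deriv u (‖z t‖ ^ 2)) • (z t) :=
    (grad_radial u hu U hUdef (z t)).gradient
  have hphi : HasDerivAt (fun s => ‖z s‖^2)
      (2 * Inner.inner ℝ (z t) (-(gradient U (z t)))) t := hz.norm_sq
  have hval : (2 : ℝ) * Inner.inner ℝ (z t) (-(gradient U (z t)))
      = -(4 * deriv u (‖z t‖^2) * ‖z t‖^2) := by
    rw [hgrad, inner_neg_right, real_inner_smul_right, real_inner_self_eq_norm_sq]
    ring
  rw [hval] at hphi
  have hsq : Real.sqrt (‖z t‖^2) = ‖z t‖ := Real.sqrt_sq (norm_nonneg _)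
  have hsqrt : HasDerivAt Real.sqrt (1 / (2 * Real.sqrt (‖z t‖^2))) (‖z t‖^2) :=
    Real.hasDerivAt_sqrt (by positivity)
  have := hsqrt.comp t hphi
  have heq : (fun s => Real.sqrt (‖z s‖^2)) = fun s => ‖z s‖ := by
    funext s; exact Real.sqrt_sq (norm_nonneg _)
  rw [Function.comp_def, heq] at this
  convert this using 1
  · rfl
  · rfl
  rw [hsq]
  field_simp
  ring

open Set in
theorem inv_lemma (g : ℝ → ℝ) (hg : ∀ s, 1 < s → 0 < g s) (ψ : ℝ → ℝ) (a b c : ℝ)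
    (hab : a ≤ b) (hc : 1 ≤ c)
    (hcont : ContinuousOn ψ (Icc a b))
    (hψ : ∀ t ∈ Icc a b, c < ψ t → HasDerivAt ψ (-(g (ψ t))) t)
    (ha : ψ a ≤ c) : ψ b ≤ c := by
  by_contra hb
  push_neg at hb
  set S : Set ℝ := Icc a b ∩ ψ ⁻¹' Iic c with hS
  have hScl : IsClosed S := hcont.preimage_isClosed_of_isClosed isClosed_Icc isClosed_Iic
  have hSne : S.Nonempty := ⟨a, ⟨le_refl a, hab⟩, ha⟩
  have hSbdd : BddAbove S := ⟨b, fun s hs => hs.1.2⟩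
  set t1 := sSup S with ht1
  have ht1S : t1 ∈ S := hScl.csSup_mem hSne hSbdd
  have ht1b : t1 < b := lt_of_le_of_ne ht1S.1.2 (by
    intro h; rw [h] at ht1S; exact absurd ht1S.2 (not_le.mpr hb))
  have hgt : ∀ s, t1 < s → s ≤ b → c < ψ s := by
    intro s hs hsb
    by_contra hcs
    push_neg at hcs
    have : s ∈ S := ⟨⟨le_trans ht1S.1.1 hs.le, hsb⟩, hcs⟩
    exact absurd (le_csSup hSbdd this) (not_le.mpr hs)
  have hanti : StrictAntiOn ψ (Icc t1 b) := by
    apply strictAntiOn_of_deriv_neg (convex_Icc t1 b)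
      (hcont.mono (Icc_subset_Icc ht1S.1.1 le_rfl))
    intro s hs
    rw [interior_Icc] at hs
    have hcψ : c < ψ s := hgt s hs.1 hs.2.le
    have hd := hψ s ⟨le_trans ht1S.1.1 hs.1.le, hs.2.le⟩ hcψ
    rw [hd.deriv]
    simp only [neg_neg, Left.neg_neg_iff]
    exact hg _ (lt_of_le_of_lt hc hcψ)
  have := hanti ⟨le_rfl, ht1S.1.2⟩ ⟨ht1b.le, le_rfl⟩ ht1b
  have := ht1S.2
  simp only [Set.mem_preimage, mem_Iic] at this
  linarith [hb]

open Set intervalIntegral in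
theorem descent_lemma (g : ℝ → ℝ) (hgc : Continuous g) (hg : ∀ s, 1 < s → 0 < g s)
    (ψ : ℝ → ℝ) (a b c : ℝ) (hab : a ≤ b) (hc : 1 < c)
    (hψ1 : ∀ t ∈ Icc a b, 1 < ψ t)
    (hψ : ∀ t ∈ Icc a b, HasDerivAt ψ (-(g (ψ t))) t) :
    (∫ s in c..ψ b, (g s)⁻¹) + (b - a) = ∫ s in c..ψ a, (g s)⁻¹ := by
  have hcontinv : ContinuousOn (fun s => (g s)⁻¹) (Ioi 1) := fun s hs =>
    ((hgc.continuousAt.inv₀ (ne_of_gt (hg s hs))).continuousWithinAt)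
  have hinv_at : ∀ s, 1 < s → ContinuousAt (fun s => (g s)⁻¹) s := fun s hs =>
    hgc.continuousAt.inv₀ (ne_of_gt (hg s hs))
  -- FTC: F has derivative (g ρ)⁻¹ at any ρ > 1
  have hF : ∀ ρ, 1 < ρ → HasDerivAt (fun r => ∫ s in c..r, (g s)⁻¹) ((g ρ)⁻¹) ρ := by
    intro ρ hρ
    apply integral_hasDerivAt_right
    · apply ContinuousOn.intervalIntegrable
      apply hcontinv.mono
      intro s hs
      rcases Set.mem_uIcc.mp hs with h | h
      · exact lt_of_lt_of_le hc h.1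
      · exact lt_of_lt_of_le hρ h.1
    · exact (ContinuousAt.stronglyMeasurableAtFilter isOpen_Ioi
        (fun s hs => hinv_at s hs) ρ hρ)
    · exact hinv_at ρ hρ
  have hφ : ∀ t ∈ Icc a b, HasDerivAt
      (fun t => (∫ s in c..ψ t, (g s)⁻¹) + t) 0 t := by
    intro t ht
    have h1 := (hF (ψ t) (hψ1 t ht)).comp t (hψ t ht)
    have h2 := h1.add (hasDerivAt_id t)
    convert h2 using 1
    · rfl
    · rfl
    · rfl
    have hne : g (ψ t) ≠ 0 := ne_of_gt (hg _ (hψ1 t ht))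
    field_simp
    norm_num
  have hconst := constant_of_has_deriv_right_zero
    (f := fun t => (∫ s in c..ψ t, (g s)⁻¹) + t)
    (a := a) (b := b)
    (fun t ht => (hφ t ht).continuousAt.continuousWithinAt)
    (fun t ht => (hφ t (Set.mem_Icc_of_Ico ht)).hasDerivWithinAt)
  have := hconst b ⟨hab, le_rfl⟩
  linarith

end Aux

/-- For `U(x) = u(‖x‖²)` with `u` twice differentiable, convex on `[0,∞)` and with
unique minimum at `1`, the flow of `x' = -∇U(x)` is strongly contracting (there exist `r, t > 0`
with `‖x_t(y)‖ ≤ r` for every initial condition `y`) iff `∫_R^∞ ‖∇U(s e₁)‖⁻¹ ds < ∞` for some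
`R > 0`. -/
theorem stmt2 {d : ℕ} (hd : 2 ≤ d) (u : ℝ → ℝ) (hu : ContDiff ℝ 2 u)
    (hconv : ConvexOn ℝ (Set.Ici 0) u)
    (hmin : ∀ s ∈ Set.Ici (0 : ℝ), s ≠ 1 → u 1 < u s)
    (U : EuclideanSpace ℝ (Fin d) → ℝ) (hUdef : ∀ x, U x = u (‖x‖ ^ 2))
    (x : ℝ → EuclideanSpace ℝ (Fin d) → EuclideanSpace ℝ (Fin d))
    (hinit : ∀ y, x 0 y = y)
    (hsol : ∀ y, ∀ t : ℝ, 0 ≤ t → HasDerivAt (fun s => x s y) (-(gradient U (x t y))) t) :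
    (∃ r > (0 : ℝ), ∃ t > (0 : ℝ), ∀ y, ‖x t y‖ ≤ r) ↔
    (∃ R > (0 : ℝ), IntegrableOn
      (fun s : ℝ => ‖gradient U (s • (EuclideanSpace.single ⟨0, by omega⟩ 1 : EuclideanSpace ℝ (Fin d)))‖⁻¹)
      (Set.Ioi R)) := by
  classical
  set e₁ : EuclideanSpace ℝ (Fin d) := EuclideanSpace.single ⟨0, by omega⟩ 1 with he₁
  set g : ℝ → ℝ := fun s => 2 * deriv u (s ^ 2) * s with hgdef
  have hg : ∀ s, 1 < s → 0 < g s := by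
    intro s hs
    have h1 : 0 < deriv u (s ^ 2) := deriv_pos_of u hu hconv hmin (s ^ 2) (by nlinarith)
    have h2 : (0:ℝ) < s := by linarith
    simp only [hgdef]
    positivity
  have hgc : Continuous g := by
    have := (hu.continuous_deriv one_le_two).comp (continuous_pow 2)
    exact (continuous_const.mul this).mul continuous_id
  have hnorme : ‖e₁‖ = 1 := by
    rw [he₁, EuclideanSpace.norm_single]; norm_num
  have hnorm : ∀ s : ℝ, ‖gradient U (s • e₁)‖ = |g s| := by
    intro s
    have hgr : gradient U (s • e₁) = (2 * deriv u (‖s • e₁‖ ^ 2)) • (s • e₁) :=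
      (grad_radial u hu U hUdef (s • e₁)).gradient
    have hns : ‖s • e₁‖ = |s| := by rw [norm_smul, hnorme, Real.norm_eq_abs, mul_one]
    rw [hgr, norm_smul, hns, Real.norm_eq_abs, hgdef]
    simp only [sq_abs]
    rw [abs_mul, abs_mul, abs_mul]
  have hψd : ∀ (y : EuclideanSpace ℝ (Fin d)) (s : ℝ), 0 ≤ s → 0 < ‖x s y‖ →
      HasDerivAt (fun τ => ‖x τ y‖) (-(g (‖x s y‖))) s := by
    intro y s hs hpos
    exact psi_deriv u hu U hUdef (fun τ => x τ y) s (hsol y s hs) hpos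
  have hψcont : ∀ (y : EuclideanSpace ℝ (Fin d)) (a b : ℝ), 0 ≤ a →
      ContinuousOn (fun τ => ‖x τ y‖) (Set.Icc a b) := by
    intro y a b ha s hs
    exact ((hsol y s (le_trans ha hs.1)).continuousAt.norm).continuousWithinAt
  constructor
  · -- contraction → integrable
    rintro ⟨r, hr, t, ht, hcontr⟩
    set c : ℝ := max r 1 + 1 with hcdef
    have hc1 : 1 < c := by simp only [hcdef]; have := le_max_right r 1; linarith
    have hrc : r < c := by simp only [hcdef]; have := le_max_left r 1; linarith
    refine ⟨c, by linarith, ?_⟩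
    set f : ℝ → ℝ := fun s => ‖gradient U (s • e₁)‖⁻¹ with hfdef
    have hfnonneg : ∀ s, 0 ≤ f s := fun s => inv_nonneg.mpr (norm_nonneg _)
    have hfg : ∀ s, 1 < s → f s = (g s)⁻¹ := by
      intro s hs
      simp only [hfdef, hnorm s, abs_of_pos (hg s hs)]
    have hfcont : ContinuousOn f (Set.Ici c) := by
      intro s hs
      have h1s : 1 < s := lt_of_lt_of_le hc1 hs
      have : ContinuousAt f s := by
        have : ContinuousAt (fun s => |g s|⁻¹) s := by
          apply ContinuousAt.inv₀ (continuous_abs.continuousAt.comp hgc.continuousAt)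
          simp only [Function.comp]
          exact ne_of_gt (abs_pos.mpr (ne_of_gt (hg s h1s)))
        apply this.congr
        filter_upwards with τ
        simp only [hfdef, hnorm τ]
      exact this.continuousWithinAt
    -- key claim : for all ρ > c, ∫ s in c..ρ, f s ≤ t
    have claim : ∀ ρ : ℝ, c < ρ → (∫ s in c..ρ, f s) ≤ t := by
      intro ρ hρ
      set y : EuclideanSpace ℝ (Fin d) := ρ • e₁ with hydef
      set ψ : ℝ → ℝ := fun τ => ‖x τ y‖ with hψdef
      have hψ0 : ψ 0 = ρ := by
        simp only [hψdef, hinit, hydef, norm_smul, hnorme, Real.norm_eq_abs, mul_one]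
        exact abs_of_pos (show (0:ℝ) < ρ by linarith)
      set S : Set ℝ := Set.Icc 0 t ∩ ψ ⁻¹' Set.Iic c with hSdef
      have hScl : IsClosed S :=
        (hψcont y 0 t le_rfl).preimage_isClosed_of_isClosed isClosed_Icc isClosed_Iic
      have htS : t ∈ S := ⟨⟨ht.le, le_rfl⟩, le_trans (hcontr y) hrc.le⟩
      have hSne : S.Nonempty := ⟨t, htS⟩
      have hSbdd : BddBelow S := ⟨0, fun s hs => hs.1.1⟩
      set t0 : ℝ := sInf S with ht0def
      have ht0S : t0 ∈ S := hScl.csInf_mem hSne hSbdd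
      have h0 : ∀ s, 0 ≤ s → s < t0 → c < ψ s := by
        intro s hs hst0
        by_contra hcs
        push_neg at hcs
        have : s ∈ S := ⟨⟨hs, le_trans hst0.le ht0S.1.2⟩, hcs⟩
        exact absurd (csInf_le hSbdd this) (not_le.mpr hst0)
      have ht0pos : 0 < t0 := by
        rcases lt_or_eq_of_le ht0S.1.1 with h | h
        · exact h
        · exfalso
          have := ht0S.2
          simp only [Set.mem_preimage, Set.mem_Iic] at this
          rw [← h, hψ0] at this
          linarith
      have hψt0 : ψ t0 = c := by
        have hle : ψ t0 ≤ c := ht0S.2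
        have hge : c ≤ ψ t0 := by
          have htend : Filter.Tendsto ψ (nhdsWithin t0 (Set.Iio t0)) (nhds (ψ t0)) :=
            (((hsol y t0 ht0S.1.1).continuousAt.norm)).continuousWithinAt.tendsto
          refine ge_of_tendsto htend ?_
          filter_upwards [Ioo_mem_nhdsLT_of_mem (Set.mem_Ioc.mpr ⟨ht0pos, le_rfl⟩)] with s hs
          exact (h0 s hs.1.le hs.2).le
        linarith
      have hψ1 : ∀ s ∈ Set.Icc 0 t0, 1 < ψ s := by
        intro s hs
        rcases lt_or_eq_of_le hs.2 with h | h
        · exact lt_trans hc1 (h0 s hs.1 h)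
        · rw [h, hψt0]; exact hc1
      have hdes := descent_lemma g hgc hg ψ 0 t0 c ht0pos.le hc1 hψ1
        (fun s hs => hψd y s hs.1 (lt_trans one_pos (hψ1 s hs)))
      rw [hψt0, hψ0, intervalIntegral.integral_same] at hdes
      have heq : (∫ s in c..ρ, f s) = ∫ s in c..ρ, (g s)⁻¹ := by
        apply intervalIntegral.integral_congr
        intro s hs
        have : c ≤ s := by
          rcases Set.mem_uIcc.mp hs with h | h
          · exact h.1
          · linarith [h.1]
        exact hfg s (lt_of_lt_of_le hc1 this)
      rw [heq]
      linarith [ht0S.1.2]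
    -- conclude integrability
    apply MeasureTheory.integrableOn_Ioi_of_intervalIntegral_norm_bounded t c
      (b := fun ρ : ℝ => ρ) (l := Filter.atTop) ?_ Filter.tendsto_id ?_
    · intro ρ
      rcases le_or_gt ρ c with h | h
      · rw [Set.Ioc_eq_empty (not_lt.mpr h)]
        exact integrableOn_empty
      · exact ((hfcont.mono (Set.Icc_subset_Ici_self)).integrableOn_Icc).mono_set
          Set.Ioc_subset_Icc_self
    · filter_upwards [Filter.eventually_gt_atTop c] with ρ hρ
      have : (∫ s in c..ρ, ‖f s‖) = ∫ s in c..ρ, f s := by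
        apply intervalIntegral.integral_congr
        intro s _
        exact Real.norm_of_nonneg (hfnonneg s)
      rw [this]
      exact claim ρ hρ
  · -- integrable → contraction
    rintro ⟨R, hR, hInt⟩
    set c : ℝ := max R 1 + 1 with hcdef
    have hc1 : 1 < c := by simp only [hcdef]; have := le_max_right R 1; linarith
    have hRc : R < c := by simp only [hcdef]; have := le_max_left R 1; linarith
    have hInt' : IntegrableOn (fun s => (g s)⁻¹) (Set.Ioi c) := by
      apply ((hInt.mono_set (Set.Ioi_subset_Ioi hRc.le)).congr_fun ?_ measurableSet_Ioi)
      intro s hs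
      have h1s : 1 < s := lt_trans hc1 hs
      simp only [hnorm s, abs_of_pos (hg s h1s)]
    set T : ℝ := ∫ s in Set.Ioi c, (g s)⁻¹ with hTdef
    have hT0 : 0 ≤ T := by
      apply setIntegral_nonneg measurableSet_Ioi
      intro s hs
      exact inv_nonneg.mpr (hg s (lt_trans hc1 hs)).le
    refine ⟨c, by linarith, T + 1, by linarith, ?_⟩
    intro y
    set ψ : ℝ → ℝ := fun τ => ‖x τ y‖ with hψdef
    set t : ℝ := T + 1 with htdef
    have ht0 : (0:ℝ) ≤ t := by linarith
    by_cases hex : ∃ t0 ∈ Set.Icc (0:ℝ) t, ψ t0 ≤ c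
    · obtain ⟨t0, ht0m, hψt0⟩ := hex
      exact inv_lemma g hg ψ t0 t c ht0m.2 hc1.le (hψcont y t0 t ht0m.1)
        (fun s hs hcs => hψd y s (le_trans ht0m.1 hs.1) (by linarith)) hψt0
    · push_neg at hex
      exfalso
      have hgt : ∀ s ∈ Set.Icc (0:ℝ) t, c < ψ s := fun s hs => hex s hs
      have hdes := descent_lemma g hgc hg ψ 0 t c ht0 hc1
        (fun s hs => lt_trans hc1 (hgt s hs))
        (fun s hs => hψd y s hs.1 (by linarith [hgt s hs]))
      have h1 : (0:ℝ) ≤ ∫ s in c..ψ t, (g s)⁻¹ := by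
        apply intervalIntegral.integral_nonneg (by linarith [hgt t ⟨ht0, le_rfl⟩])
        intro s hs
        exact inv_nonneg.mpr (hg s (lt_of_lt_of_le hc1 hs.1)).le
      have h2 : (∫ s in c..ψ 0, (g s)⁻¹) ≤ T := by
        rw [intervalIntegral.integral_of_le (by linarith [hgt 0 ⟨le_rfl, ht0⟩])]
        apply setIntegral_mono_set hInt'
        · filter_upwards [ae_restrict_mem measurableSet_Ioi] with s hs
          exact inv_nonneg.mpr (hg s (lt_trans hc1 hs)).le
        · exact HasSubset.Subset.eventuallyLE Set.Ioc_subset_Ioi_self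
      linarith
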